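/- (Semidefinite characterization of the MMV atomic norm) For Y ∈ ℂ^{N×L}, the atomic norm ‖Y‖_𝒜 = inf{Σ_k c_k : Y = Σ_k c_k a(f_k)φ_k, c_k > 0, f_k ∈ [0,1), ‖φ_k‖₂ = 1} equals the optimal value of the SDP: minimize (1/(2√N)) tr(U) over positive semidefinite Hermitian U = [[W, Yᴴ],[Y, T(u)]] with T(u) Hermitian Toeplitz. -/

import Mathlib

set_option maxHeartbeats 1000000

open Matrix ComplexOrder

/-- The atom `a(f)φ ∈ ℂ^{N×L}`. -/
noncomputable def atom (N L : ℕ) (f : ℝ) (φ : Fin L → ℂ) : Matrix (Fin N) (Fin L) ℂ :=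
  Matrix.of fun (i : Fin N) (l : Fin L) =>
    Complex.exp (2 * Real.pi * Complex.I * ((i : ℕ) : ℂ) * (f : ℂ)) * φ l

/-- The MMV atomic norm of `Y`. -/
noncomputable def atomicNorm (N L : ℕ) (Y : Matrix (Fin N) (Fin L) ℂ) : ℝ :=
  sInf {t : ℝ | ∃ (K : ℕ) (c : Fin K → ℝ) (f : Fin K → ℝ) (φ : Fin K → Fin L → ℂ),
    (∀ k, 0 < c k) ∧ (∀ k, f k ∈ Set.Ico (0 : ℝ) 1) ∧
    (∀ k, ∑ l, ‖φ k l‖ ^ 2 = 1) ∧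
    Y = ∑ k, (c k : ℂ) • atom N L (f k) (φ k) ∧ t = ∑ k, c k}

/-- A matrix is Toeplitz if its entries are constant along diagonals. -/
def IsToeplitz {N : ℕ} (T : Matrix (Fin N) (Fin N) ℂ) : Prop :=
  ∀ i j i' j' : Fin N, (i : ℕ) + (j' : ℕ) = (i' : ℕ) + (j : ℕ) → T i j = T i' j'

open Module

namespace Stmt14Aux

def SA (N L : ℕ) (Y : Matrix (Fin N) (Fin L) ℂ) : Set ℝ :=
  {t : ℝ | ∃ (K : ℕ) (c : Fin K → ℝ) (f : Fin K → ℝ) (φ : Fin K → Fin L → ℂ),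
    (∀ k, 0 < c k) ∧ (∀ k, f k ∈ Set.Ico (0 : ℝ) 1) ∧
    (∀ k, ∑ l, ‖φ k l‖ ^ 2 = 1) ∧
    Y = ∑ k, (c k : ℂ) • atom N L (f k) (φ k) ∧ t = ∑ k, c k}

def IsToeplitz {N : ℕ} (T : Matrix (Fin N) (Fin N) ℂ) : Prop :=
  ∀ i j i' j' : Fin N, (i : ℕ) + (j' : ℕ) = (i' : ℕ) + (j : ℕ) → T i j = T i' j'

def SB (N L : ℕ) (Y : Matrix (Fin N) (Fin L) ℂ) : Set ℝ :=
  {v : ℝ | ∃ (W : Matrix (Fin L) (Fin L) ℂ) (Tm : Matrix (Fin N) (Fin N) ℂ),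
      IsToeplitz Tm ∧ (Matrix.fromBlocks W Yᴴ Y Tm).PosSemidef ∧
      v = (1 / (2 * Real.sqrt N)) * ((Matrix.fromBlocks W Yᴴ Y Tm).trace).re}

lemma SA_bddBelow (N L : ℕ) (Y : Matrix (Fin N) (Fin L) ℂ) : BddBelow (SA N L Y) := by
  refine ⟨0, fun t ht => ?_⟩
  obtain ⟨K, c, f, φ, hc, -, -, -, ht⟩ := ht
  rw [ht]
  exact Finset.sum_nonneg fun k _ => (hc k).le

lemma exists_freq (z : ℂ) (hz : ‖z‖ = 1) :
    ∃ f : ℝ, f ∈ Set.Ico (0:ℝ) 1 ∧ Complex.exp (2 * Real.pi * Complex.I * f) = z := by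
  refine ⟨Int.fract (z.arg / (2 * Real.pi)), ⟨Int.fract_nonneg _, Int.fract_lt_one _⟩, ?_⟩
  have hπ : (2 * Real.pi) ≠ 0 := by positivity
  have harg : Complex.exp (z.arg * Complex.I) = z := by
    have h := Complex.norm_mul_exp_arg_mul_I z
    rwa [hz, Complex.ofReal_one, one_mul] at h
  rw [Int.fract]
  have key : ((2:ℂ) * Real.pi * Complex.I *
      ((z.arg / (2*Real.pi) - (⌊z.arg / (2*Real.pi)⌋ : ℝ) : ℝ) : ℂ))
      = z.arg * Complex.I - (⌊z.arg / (2*Real.pi)⌋ : ℤ) * (2 * Real.pi * Complex.I) := by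
    push_cast
    have : (Real.pi : ℂ) ≠ 0 := by exact_mod_cast Real.pi_ne_zero
    field_simp
  rw [key, Complex.exp_sub, Complex.exp_int_mul_two_pi_mul_I, div_one, harg]

lemma exp_diag (f : ℝ) {a b a' b' : ℕ} (hab : a + b' = a' + b) :
    Complex.exp (2*Real.pi*Complex.I*a*f) *
      (starRingEnd ℂ) (Complex.exp (2*Real.pi*Complex.I*b*f))
    = Complex.exp (2*Real.pi*Complex.I*a'*f) *
      (starRingEnd ℂ) (Complex.exp (2*Real.pi*Complex.I*b'*f)) := by
  have hconj : ∀ m : ℕ, (starRingEnd ℂ) (Complex.exp (2*Real.pi*Complex.I*m*f))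
      = Complex.exp (-(2*Real.pi*Complex.I*m*f)) := by
    intro m
    rw [← Complex.exp_conj]
    congr 1
    simp only [map_neg, _root_.map_mul, Complex.conj_I, Complex.conj_ofReal, map_ofNat, map_natCast]
    ring
  rw [hconj, hconj, ← Complex.exp_add, ← Complex.exp_add]
  congr 1
  have hcast : (a:ℂ) + (b':ℂ) = (a':ℂ) + (b:ℂ) := by exact_mod_cast hab
  linear_combination (2*(Real.pi:ℂ)*Complex.I*(f:ℂ)) * hcast

lemma mem_SA_of_decomp {N L : ℕ} {Y : Matrix (Fin N) (Fin L) ℂ} {K : ℕ}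
    (c : Fin K → ℝ) (f : Fin K → ℝ) (φ : Fin K → Fin L → ℂ)
    (hc : ∀ k, 0 ≤ c k) (hf : ∀ k, f k ∈ Set.Ico (0:ℝ) 1)
    (hφ : ∀ k, c k ≠ 0 → ∑ l, ‖φ k l‖ ^ 2 = 1)
    (hY : Y = ∑ k, (c k : ℂ) • atom N L (f k) (φ k)) :
    (∑ k, c k) ∈ SA N L Y := by
  classical
  set s : Finset (Fin K) := Finset.univ.filter (fun k => c k ≠ 0) with hs
  set e : Fin s.card ≃ {x // x ∈ s} := s.equivFin.symm with he
  have hes : ∀ j, (e j : Fin K) ∈ s := fun j => (e j).2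
  have hcne : ∀ j, c (e j) ≠ 0 := fun j => (Finset.mem_filter.mp (hes j)).2
  have hsum : ∀ (F : Fin K → ℂ) (hF : ∀ k, c k = 0 → F k = 0),
      ∑ j, F (e j) = ∑ k, F k := by
    intro F hF
    rw [Fintype.sum_equiv e (fun j => F (e j)) (fun x => F x) (fun j => rfl)]
    rw [Finset.sum_coe_sort s F]
    exact Finset.sum_filter_of_ne (fun k _ hFk => by
      intro hck; exact hFk (hF k hck))
  have hsumR : ∀ (F : Fin K → ℝ) (hF : ∀ k, c k = 0 → F k = 0),
      ∑ j, F (e j) = ∑ k, F k := by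
    intro F hF
    rw [Fintype.sum_equiv e (fun j => F (e j)) (fun x => F x) (fun j => rfl)]
    rw [Finset.sum_coe_sort s F]
    exact Finset.sum_filter_of_ne (fun k _ hFk => by
      intro hck; exact hFk (hF k hck))
  refine ⟨s.card, fun j => c (e j), fun j => f (e j), fun j => φ (e j), ?_, ?_, ?_, ?_, ?_⟩
  · exact fun j => lt_of_le_of_ne (hc _) (Ne.symm (hcne j))
  · exact fun j => hf _
  · exact fun j => hφ _ (hcne j)
  · rw [hY]
    ext i l
    rw [Matrix.sum_apply, Matrix.sum_apply]
    have := hsum (fun k => ((c k : ℂ) • atom N L (f k) (φ k)) i l)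
      (fun k hck => by simp [hck])
    exact this.symm
  · exact (hsumR c (fun k hck => hck)).symm

lemma mem_SA_of_expdecomp {N L K : ℕ} {Y : Matrix (Fin N) (Fin L) ℂ}
    (f : Fin K → ℝ) (ψ : Fin K → Fin L → ℂ)
    (hf : ∀ k, f k ∈ Set.Ico (0:ℝ) 1)
    (hY : ∀ i l, Y i l = ∑ k, Complex.exp (2*Real.pi*Complex.I*((i:ℕ):ℂ)*((f k : ℝ):ℂ)) * ψ k l) :
    (∑ k, Real.sqrt (∑ l, ‖ψ k l‖^2)) ∈ SA N L Y := by
  classical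
  set c : Fin K → ℝ := fun k => Real.sqrt (∑ l, ‖ψ k l‖ ^ 2) with hcdef
  have hc0 : ∀ k, c k = 0 → ∀ l, ψ k l = 0 := by
    intro k hck l
    have h1 : ∑ l', ‖ψ k l'‖ ^ 2 = 0 := by
      have := Real.sqrt_eq_zero (Finset.sum_nonneg fun l' _ => sq_nonneg _) |>.mp hck
      exact this
    have h2 := (Finset.sum_eq_zero_iff_of_nonneg (fun l' _ => sq_nonneg ‖ψ k l'‖)).mp h1 l
      (Finset.mem_univ l)
    have := pow_eq_zero_iff (n := 2) (by norm_num) |>.mp h2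
    exact norm_eq_zero.mp this
  set φ : Fin K → Fin L → ℂ := fun k l => ((c k)⁻¹ : ℝ) • ψ k l with hφdef
  apply mem_SA_of_decomp c f φ
  · exact fun k => Real.sqrt_nonneg _
  · exact hf
  · intro k hck
    have hsq : (c k) ^ 2 = ∑ l, ‖ψ k l‖ ^ 2 := Real.sq_sqrt (by positivity)
    have : ∑ l, ‖φ k l‖ ^ 2 = ((c k)⁻¹)^2 * ∑ l, ‖ψ k l‖ ^ 2 := by
      rw [Finset.mul_sum]
      refine Finset.sum_congr rfl fun l _ => ?_
      rw [hφdef]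
      simp only [norm_smul, Real.norm_eq_abs, mul_pow, sq_abs]
    rw [this, ← hsq]
    field_simp
  · ext i l
    rw [hY i l, Matrix.sum_apply]
    refine Finset.sum_congr rfl fun k _ => ?_
    by_cases hck : c k = 0
    · rw [hc0 k hck l, hck]
      simp
    · have hckC : ((c k : ℝ) : ℂ) ≠ 0 := by exact_mod_cast hck
      refine Eq.symm ?_
      show ((c k : ℂ) • atom N L (f k) (φ k)) i l = _
      rw [Matrix.smul_apply, smul_eq_mul, atom, Matrix.of_apply, hφdef]
      simp only [Complex.real_smul, Complex.ofReal_inv]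
      field_simp

lemma SA_nonempty (N L : ℕ) (Y : Matrix (Fin N) (Fin L) ℂ) : (SA N L Y).Nonempty := by
  classical
  rcases Nat.eq_zero_or_pos N with hN | hN
  · subst hN
    refine ⟨0, 0, fun k => k.elim0, fun k => k.elim0, fun k => k.elim0,
      fun k => k.elim0, fun k => k.elim0, fun k => k.elim0, ?_, by simp⟩
    ext i l
    exact i.elim0
  · -- Vandermonde decomposition with the N-th roots of unity
    set x : Fin N → ℂ := fun m => Complex.exp (2*Real.pi*Complex.I*(((m:ℕ):ℝ)/N : ℝ)) with hx
    have hNR : (0:ℝ) < N := by exact_mod_cast hN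
    have hxinj : Function.Injective x := by
      intro a b hab
      rw [hx] at hab
      rw [Complex.exp_eq_exp_iff_exists_int] at hab
      obtain ⟨n, hn⟩ := hab
      have hI : (2*(Real.pi:ℂ)*Complex.I) ≠ 0 := by
        simp [Complex.I_ne_zero, Complex.ofReal_ne_zero, Real.pi_ne_zero]
      have h2 : ((((a:ℕ):ℝ)/N : ℝ) : ℂ) = ((((b:ℕ):ℝ)/N : ℝ) : ℂ) + n := by
        apply mul_left_cancel₀ hI
        rw [hn]; ring
      have h3 : (((a:ℕ):ℝ)/N) = (((b:ℕ):ℝ)/N) + n := by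
        exact_mod_cast h2
      have h4 : ((a:ℕ):ℝ) = ((b:ℕ):ℝ) + n * N := by
        field_simp at h3
        linarith [h3]
      have ha1 : ((a:ℕ):ℝ) < N := by exact_mod_cast a.2
      have hb1 : ((b:ℕ):ℝ) < N := by exact_mod_cast b.2
      have ha0 : (0:ℝ) ≤ ((a:ℕ):ℝ) := by positivity
      have hb0 : (0:ℝ) ≤ ((b:ℕ):ℝ) := by positivity
      have hn0 : n = 0 := by
        have hlt : (n:ℝ) < 1 := by nlinarith
        have hgt : (-1:ℝ) < (n:ℝ) := by nlinarith
        have h5 : n < 1 := by exact_mod_cast hlt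
        have h6 : -1 < n := by exact_mod_cast hgt
        omega
      rw [hn0] at h4
      norm_num at h4
      exact Fin.ext (by exact_mod_cast h4)
    set P : Matrix (Fin N) (Fin N) ℂ := (Matrix.vandermonde x)ᵀ with hP
    have hdet : P.det ≠ 0 := by
      rw [hP, Matrix.det_transpose, Matrix.det_vandermonde]
      refine Finset.prod_ne_zero_iff.mpr fun i _ => ?_
      refine Finset.prod_ne_zero_iff.mpr fun j hj => ?_
      rw [Finset.mem_Ioi] at hj
      exact sub_ne_zero.mpr fun h => absurd ((hxinj h).symm) hj.ne
    set Ψ : Matrix (Fin N) (Fin L) ℂ := P⁻¹ * Y with hΨ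
    have hPY : P * Ψ = Y := by
      rw [hΨ, ← Matrix.mul_assoc, Matrix.mul_nonsing_inv P (isUnit_iff_ne_zero.mpr hdet),
        Matrix.one_mul]
    refine ⟨_, mem_SA_of_expdecomp (fun m => (((m:ℕ):ℝ)/N : ℝ)) (fun m l => Ψ m l)
      (fun m => ⟨by positivity, by rw [div_lt_one hNR]; exact_mod_cast m.2⟩) ?_⟩
    intro i l
    rw [← hPY, Matrix.mul_apply]
    refine Finset.sum_congr rfl fun m _ => ?_
    congr 1
    rw [hP, Matrix.transpose_apply, Matrix.vandermonde_apply, hx]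
    rw [← Complex.exp_nat_mul]
    congr 1
    push_cast
    ring



lemma posSemidef_smul_vecMulVec {ι : Type*} [Fintype ι] [DecidableEq ι] (z : ι → ℂ) {c : ℝ}
    (hc : 0 ≤ c) : ((c:ℂ) • Matrix.vecMulVec z (star z)).PosSemidef := by
  have key : (c:ℂ) • Matrix.vecMulVec z (star z)
      = (Matrix.of (fun p (_ : Unit) => ((Real.sqrt c : ℝ) : ℂ) * z p)) *
        (Matrix.of (fun p (_ : Unit) => ((Real.sqrt c : ℝ) : ℂ) * z p))ᴴ := by
    ext p q
    rw [Matrix.mul_apply]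
    simp only [Matrix.conjTranspose_apply, Matrix.of_apply, Matrix.smul_apply,
      Matrix.vecMulVec_apply, Pi.star_apply, Finset.univ_unique, Finset.sum_singleton,
      _root_.map_mul, Complex.conj_ofReal, smul_eq_mul, RCLike.star_def]
    have hcc : ((Real.sqrt c : ℝ) : ℂ) * ((Real.sqrt c : ℝ) : ℂ) = (c : ℂ) := by
      rw [← Complex.ofReal_mul, Real.mul_self_sqrt hc]
    linear_combination (-(z p * (starRingEnd ℂ) (z q))) * hcc
  rw [key]
  exact Matrix.posSemidef_self_mul_conjTranspose _

lemma dirA {N L : ℕ} (Y : Matrix (Fin N) (Fin L) ℂ) :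
    ∀ t ∈ SA N L Y, ∃ v ∈ SB N L Y, v ≤ t := by
  rintro t ⟨K, c, f, φ, hc, hf, hφ, hY, ht⟩
  rcases Nat.eq_zero_or_pos N with hN | hN
  · subst hN
    have ht0 : 0 ≤ t := by
      rw [ht]; exact Finset.sum_nonneg fun k _ => (hc k).le
    refine ⟨0, ⟨0, 0, ?_, ?_, ?_⟩, ht0⟩
    · intro i j i' j' _; exact i.elim0
    · have hzero : Matrix.fromBlocks (0 : Matrix (Fin L) (Fin L) ℂ) Yᴴ Y
          (0 : Matrix (Fin 0) (Fin 0) ℂ) = 0 := by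
        ext p q
        rcases p with p | p
        · rcases q with q | q
          · simp
          · exact q.elim0
        · exact p.elim0
      rw [hzero]
      exact Matrix.PosSemidef.zero
    · norm_num [Real.sqrt_zero]
  · have hNR : (0:ℝ) < N := by exact_mod_cast hN
    set s : ℝ := Real.sqrt N with hsdef
    have hs : 0 < s := Real.sqrt_pos.mpr hNR
    have hss : s * s = N := Real.mul_self_sqrt hNR.le
    set α : ℝ := Real.sqrt s with hα
    have hα0 : 0 < α := Real.sqrt_pos.mpr hs
    have hα2 : α * α = s := Real.mul_self_sqrt hs.le
    set β : ℝ := α⁻¹ with hβ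
    have hβ2 : β * β = s⁻¹ := by rw [hβ, ← mul_inv, hα2]
    set z : Fin K → (Fin L ⊕ Fin N) → ℂ := fun k => Sum.elim
      (fun l => ((α : ℝ) : ℂ) * (starRingEnd ℂ) (φ k l))
      (fun i => ((β : ℝ) : ℂ) *
        Complex.exp (2*Real.pi*Complex.I*((i:ℕ):ℂ)*((f k : ℝ):ℂ))) with hz
    set Mbig : Matrix (Fin L ⊕ Fin N) (Fin L ⊕ Fin N) ℂ :=
      ∑ k, (c k : ℂ) • Matrix.vecMulVec (z k) (star (z k)) with hM
    have hMapp : ∀ p q, Mbig p q = ∑ k, (c k : ℂ) * (z k p * (starRingEnd ℂ) (z k q)) := by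
      intro p q
      rw [hM, Matrix.sum_apply]
      refine Finset.sum_congr rfl fun k _ => ?_
      simp only [Matrix.smul_apply, Matrix.vecMulVec_apply, Pi.star_apply, RCLike.star_def,
        smul_eq_mul]
    set Wm : Matrix (Fin L) (Fin L) ℂ := Mbig.toBlocks₁₁ with hW
    set Tm : Matrix (Fin N) (Fin N) ℂ := Mbig.toBlocks₂₂ with hT
    have hβα : ((β : ℝ) : ℂ) * ((α : ℝ) : ℂ) = 1 := by
      rw [← Complex.ofReal_mul, hβ, inv_mul_cancel₀ hα0.ne']
      norm_num
    have hYblock : ∀ i l, Mbig (Sum.inr i) (Sum.inl l) = Y i l := by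
      intro i l
      rw [hMapp, hY]
      rw [Matrix.sum_apply]
      refine Finset.sum_congr rfl fun k _ => ?_
      rw [Matrix.smul_apply, smul_eq_mul, atom, Matrix.of_apply, hz]
      simp only [Sum.elim_inr, Sum.elim_inl, _root_.map_mul, Complex.conj_conj,
        Complex.conj_ofReal]
      linear_combination (c k : ℂ) *
        Complex.exp (2*Real.pi*Complex.I*((i:ℕ):ℂ)*((f k : ℝ):ℂ)) * (φ k l) * hβα
    have hblocks : Matrix.fromBlocks Wm Yᴴ Y Tm = Mbig := by
      ext p q
      rcases p with l | i <;> rcases q with l' | i'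
      · rfl
      · show Yᴴ l i' = Mbig (Sum.inl l) (Sum.inr i')
        rw [Matrix.conjTranspose_apply, ← hYblock i' l, hMapp, hMapp, star_sum]
        refine Finset.sum_congr rfl fun k _ => ?_
        simp only [star_mul', RCLike.star_def, _root_.map_mul, Complex.conj_conj,
          Complex.conj_ofReal]
        ring
      · exact (hYblock i l').symm
      · rfl
    have hToep : IsToeplitz Tm := by
      intro i j i' j' hij
      show Mbig (Sum.inr i) (Sum.inr j) = Mbig (Sum.inr i') (Sum.inr j')
      rw [hMapp, hMapp]
      refine Finset.sum_congr rfl fun k _ => ?_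
      rw [hz]
      simp only [Sum.elim_inr, _root_.map_mul, Complex.conj_ofReal]
      have hd := exp_diag (f k) (a := (i:ℕ)) (b := (j:ℕ)) (a' := (i':ℕ)) (b' := (j':ℕ)) hij
      linear_combination (c k : ℂ) * ((β : ℝ) : ℂ) * ((β : ℝ) : ℂ) * hd
    have hPSD : Mbig.PosSemidef := by
      rw [hM]
      refine Finset.sum_induction _ Matrix.PosSemidef
        (fun a b ha hb => ha.add hb) Matrix.PosSemidef.zero (fun k _ => ?_)
      exact posSemidef_smul_vecMulVec (z k) (hc k).le
    have hnormSq : ∀ k (p : Fin L ⊕ Fin N), z k p * (starRingEnd ℂ) (z k p)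
        = ((Complex.normSq (z k p) : ℝ) : ℂ) := fun k p => Complex.mul_conj (z k p)
    have htr : Mbig.trace = (((2 * s) * ∑ k, c k : ℝ) : ℂ) := by
      rw [Matrix.trace]
      have hdiag : ∀ p, Mbig.diag p = ∑ k, (c k : ℂ) * ((Complex.normSq (z k p) : ℝ) : ℂ) := by
        intro p
        rw [Matrix.diag_apply, hMapp]
        exact Finset.sum_congr rfl fun k _ => by rw [hnormSq]
      rw [Finset.sum_congr rfl fun p _ => hdiag p, Finset.sum_comm]
      have hrow : ∀ k, ∑ p : Fin L ⊕ Fin N, (c k : ℂ) * ((Complex.normSq (z k p) : ℝ) : ℂ)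
          = ((c k * (2 * s) : ℝ) : ℂ) := by
        intro k
        rw [← Finset.mul_sum]
        have hsplit : ∑ p : Fin L ⊕ Fin N, ((Complex.normSq (z k p) : ℝ) : ℂ)
            = ((∑ l, Complex.normSq (z k (Sum.inl l))
               + ∑ i, Complex.normSq (z k (Sum.inr i)) : ℝ) : ℂ) := by
          rw [Fintype.sum_sum_type]
          push_cast
          rfl
        rw [hsplit]
        have hL : ∑ l, Complex.normSq (z k (Sum.inl l)) = s := by
          have : ∀ l, Complex.normSq (z k (Sum.inl l)) = s * ‖φ k l‖ ^ 2 := by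
            intro l
            rw [hz]
            simp only [Sum.elim_inl, Complex.normSq_mul, Complex.normSq_conj,
              Complex.normSq_ofReal]
            rw [← Complex.sq_norm, hα2]
          rw [Finset.sum_congr rfl fun l _ => this l, ← Finset.mul_sum, hφ k, mul_one]
        have hN2 : ∑ i : Fin N, Complex.normSq (z k (Sum.inr i)) = s := by
          have : ∀ i : Fin N, Complex.normSq (z k (Sum.inr i)) = s⁻¹ := by
            intro i
            rw [hz]
            simp only [Sum.elim_inr, Complex.normSq_mul, Complex.normSq_ofReal]
            have hexp : Complex.normSq (Complex.exp
                (2*Real.pi*Complex.I*((i:ℕ):ℂ)*((f k : ℝ):ℂ))) = 1 := by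
              have harg : (2*Real.pi*Complex.I*((i:ℕ):ℂ)*((f k : ℝ):ℂ))
                  = ((2*Real.pi*(i:ℕ)*(f k) : ℝ) : ℂ) * Complex.I := by
                push_cast; ring
              rw [harg, ← Complex.sq_norm, Complex.norm_exp_ofReal_mul_I]
              norm_num
            rw [hexp, hβ2, mul_one]
          rw [Finset.sum_congr rfl fun i _ => this i, Finset.sum_const, Finset.card_univ,
            Fintype.card_fin, nsmul_eq_mul]
          rw [← hss]
          field_simp
        rw [hL, hN2]
        push_cast
        ring
      rw [Finset.sum_congr rfl fun k _ => hrow k]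
      push_cast
      rw [← Finset.sum_mul]
      ring
    refine ⟨t, ⟨Wm, Tm, hToep, ?_, ?_⟩, le_refl t⟩
    · rw [hblocks]; exact hPSD
    · rw [hblocks, htr, Complex.ofReal_re, ht, ← hsdef]
      field_simp

section InnerSpace
variable {E : Type*} [NormedAddCommGroup E] [InnerProductSpace ℂ E] [FiniteDimensional ℂ E]
local notation "⟪" x ", " y "⟫" => @inner ℂ _ _ x y
open Module Module.End
set_option linter.unusedSectionVars false


lemma abs_eigenvalue_one (U : E ≃ₗᵢ[ℂ] E) {μ : ℂ} {v : E}
    (hv : U v = μ • v) (hv0 : v ≠ 0) : ‖μ‖ = 1 := by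
  have h1 : ‖U v‖ = ‖v‖ := U.norm_map v
  rw [hv, norm_smul] at h1
  have hv' : ‖v‖ ≠ 0 := norm_ne_zero_iff.mpr hv0
  have : ‖μ‖ = 1 := by
    field_simp at h1
    tauto
  simpa using this

/-- spectral theorem for unitaries on a f.d. complex inner product space -/
lemma unitary_spectral {n : ℕ} (hn : finrank ℂ E = n) (U : E ≃ₗᵢ[ℂ] E) :
    ∃ (b : OrthonormalBasis (Fin n) ℂ E) (μ : Fin n → ℂ),
      (∀ k, ‖μ k‖ = 1) ∧ ∀ k, U (b k) = μ k • b k := by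
  set T : E →ₗ[ℂ] E := (U.toLinearEquiv : E →ₗ[ℂ] E) with hT
  have hTapp : ∀ x, T x = U x := fun _ => rfl
  -- eigenvectors of U under symm
  have hsymm : ∀ (μ : ℂ) (v : E), v ∈ eigenspace T μ → U.symm v ∈ eigenspace T μ := by
    intro μ v hv
    rw [mem_eigenspace_iff, hTapp] at hv ⊢
    have h2 : U.symm (U v) = U.symm (μ • v) := by rw [hv]
    rw [U.symm_apply_apply, U.symm.map_smul] at h2
    rw [← h2, U.apply_symm_apply]
  -- orthogonal family
  have hfam : OrthogonalFamily ℂ (fun μ => eigenspace T μ) fun μ => (eigenspace T μ).subtypeₗᵢ := by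
    rintro μ ν hμν ⟨v, hv⟩ ⟨w, hw⟩
    by_cases hv0 : v = 0
    · simp [hv0]
    by_cases hw0 : w = 0
    · simp [hw0]
    rw [mem_eigenspace_iff, hTapp] at hv hw
    have key : ⟪v, w⟫ = (starRingEnd ℂ) μ * ν * ⟪v, w⟫ := by
      conv_lhs => rw [← U.inner_map_map v w, hv, hw, inner_smul_left, inner_smul_right]
      ring
    show ⟪v, w⟫ = 0
    by_contra hinner
    have h1 : (starRingEnd ℂ) μ * ν = 1 := by
      have h2 : ((starRingEnd ℂ) μ * ν - 1) * ⟪v, w⟫ = 0 := by linear_combination -key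
      rcases mul_eq_zero.mp h2 with h | h
      · exact sub_eq_zero.mp h
      · exact absurd h hinner
    have hμ1 : ‖μ‖ = 1 := abs_eigenvalue_one U (by rw [← hTapp]; exact hv) hv0
    have : μ = ν := by
      have h2 : μ * ((starRingEnd ℂ) μ * ν) = μ * 1 := by rw [h1]
      rw [← mul_assoc, Complex.mul_conj] at h2
      have : Complex.normSq μ = 1 := by
        have := Complex.sq_norm μ
        rw [hμ1] at this; simpa using this.symm
      rw [this] at h2; simpa using h2.symm
    exact absurd this hμν
  -- invariance of orthogonal complement of the supremum
  set S : Submodule ℂ E := ⨆ μ, eigenspace T μ with hS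
  have hSinv : ∀ v ∈ Sᗮ, T v ∈ Sᗮ := by
    intro v hv u hu
    have hus : U.symm u ∈ S := by
      have key : S ≤ Submodule.comap (U.symm.toLinearEquiv : E →ₗ[ℂ] E) S := by
        refine iSup_le fun μ => fun x hx => ?_
        exact le_iSup (fun μ => eigenspace T μ) μ (hsymm μ x hx)
      exact key hu
    have : ⟪u, T v⟫ = ⟪U.symm u, v⟫ := by
      rw [hTapp, ← U.inner_map_map (U.symm u) v, U.apply_symm_apply]
    rw [this]
    exact hv _ hus
  have hbot : Sᗮ = ⊥ := by
    by_contra hne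
    haveI : Nontrivial Sᗮ := Submodule.nontrivial_iff_ne_bot.mpr fun h => hne (by rw [h])
    obtain ⟨μ, hμ⟩ := Module.End.exists_eigenvalue (T.restrict hSinv)
    obtain ⟨v, hv, hv0⟩ := hμ.exists_hasEigenvector
    rw [mem_eigenspace_iff] at hv
    have hvS : (v : E) ∈ S := by
      refine le_iSup (fun μ => eigenspace T μ) μ ?_
      rw [mem_eigenspace_iff]
      have := congrArg (Subtype.val) hv
      simpa [LinearMap.restrict_apply] using this
    have : (v : E) = 0 :=
      inner_self_eq_zero.mp (Submodule.inner_right_of_mem_orthogonal hvS v.2)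
    exact hv0 (Subtype.ext this)
  have hbot' : (⨆ μ : Eigenvalues T, eigenspace T μ)ᗮ = ⊥ := by
    rw [show (⨆ μ : Eigenvalues T, eigenspace T μ) = ⨆ μ : {μ // eigenspace T μ ≠ ⊥}, eigenspace T μ from rfl,
      iSup_ne_bot_subtype, ← hS, hbot]
  have hfam' : OrthogonalFamily ℂ (fun μ : Eigenvalues T => eigenspace T μ) fun μ =>
      (eigenspace T μ).subtypeₗᵢ := hfam.comp Subtype.coe_injective
  have hint : DirectSum.IsInternal fun μ : Eigenvalues T => eigenspace T μ :=
    hfam'.isInternal_iff.mpr hbot'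
  set b := hint.subordinateOrthonormalBasis hn hfam' with hb
  refine ⟨b, fun k => (hint.subordinateOrthonormalBasisIndex hn k hfam').val, fun k => ?_, fun k => ?_⟩
  · have hmem : b k ∈ eigenspace T (hint.subordinateOrthonormalBasisIndex hn k hfam').val :=
      hint.subordinateOrthonormalBasis_subordinate hn k hfam'
    rw [mem_eigenspace_iff, hTapp] at hmem
    exact abs_eigenvalue_one U hmem (by simpa using b.toBasis.ne_zero k)
  · have hmem : b k ∈ eigenspace T (hint.subordinateOrthonormalBasisIndex hn k hfam').val :=
      hint.subordinateOrthonormalBasis_subordinate hn k hfam'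
    rw [mem_eigenspace_iff, hTapp] at hmem
    exact hmem



/-- Two tuples with the same Gram matrix are related by a unitary. -/
lemma exists_unitary_map {m : ℕ} (v w : Fin m → E)
    (h : ∀ i j, ⟪v i, v j⟫ = ⟪w i, w j⟫) :
    ∃ U : E ≃ₗᵢ[ℂ] E, ∀ i, U (v i) = w i := by
  set A : (Fin m → ℂ) →ₗ[ℂ] E :=
    ∑ i, (LinearMap.proj i : (Fin m → ℂ) →ₗ[ℂ] ℂ).smulRight (v i) with hA
  set B : (Fin m → ℂ) →ₗ[ℂ] E :=
    ∑ i, (LinearMap.proj i : (Fin m → ℂ) →ₗ[ℂ] ℂ).smulRight (w i) with hB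
  have hAapp : ∀ x, A x = ∑ i, x i • v i := by
    intro x; simp [hA, LinearMap.sum_apply]
  have hBapp : ∀ x, B x = ∑ i, x i • w i := by
    intro x; simp [hB, LinearMap.sum_apply]
  have hApp_single : ∀ i, A (Pi.single i 1) = v i := by
    intro i
    rw [hAapp, Finset.sum_eq_single i]
    · simp
    · intro j _ hj; simp [Pi.single_apply, hj]
    · simp
  have hBpp_single : ∀ i, B (Pi.single i 1) = w i := by
    intro i
    rw [hBapp, Finset.sum_eq_single i]
    · simp
    · intro j _ hj; simp [Pi.single_apply, hj]
    · simp
  have hinner : ∀ x, ⟪A x, A x⟫ = ⟪B x, B x⟫ := by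
    intro x
    rw [hAapp, hBapp, inner_sum, inner_sum]
    refine Finset.sum_congr rfl fun j _ => ?_
    rw [sum_inner, sum_inner]
    refine Finset.sum_congr rfl fun i _ => ?_
    rw [inner_smul_left, inner_smul_left, inner_smul_right, inner_smul_right, h]
  have hnorm : ∀ x, ‖A x‖ = ‖B x‖ := by
    intro x
    have h2 : (‖A x‖ : ℝ) ^ 2 = (‖B x‖ : ℝ) ^ 2 := by
      rw [@norm_sq_eq_re_inner ℂ, @norm_sq_eq_re_inner ℂ, hinner x]
    rw [← Real.sqrt_sq (norm_nonneg (A x)), h2, Real.sqrt_sq (norm_nonneg (B x))]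
  have hker : LinearMap.ker A ≤ LinearMap.ker B := by
    intro x hx
    rw [LinearMap.mem_ker] at hx ⊢
    have h1 := hnorm x
    rw [hx, norm_zero] at h1
    exact norm_eq_zero.mp h1.symm
  set φ : ((Fin m → ℂ) ⧸ LinearMap.ker A) →ₗ[ℂ] E := (LinearMap.ker A).liftQ B hker with hφ
  set L0 : LinearMap.range A →ₗ[ℂ] E :=
    φ ∘ₗ (A.quotKerEquivRange.symm : LinearMap.range A →ₗ[ℂ] ((Fin m → ℂ) ⧸ LinearMap.ker A)) with hL0
  have hL0app : ∀ x : Fin m → ℂ, L0 ⟨A x, LinearMap.mem_range_self A x⟩ = B x := by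
    intro x
    rw [hL0]
    simp only [LinearMap.comp_apply, LinearEquiv.coe_coe]
    rw [A.quotKerEquivRange_symm_apply_image x (LinearMap.mem_range_self A x), hφ]
    exact Submodule.liftQ_apply _ _ _
  have hL0norm : ∀ y : LinearMap.range A, ‖L0 y‖ = ‖y‖ := by
    rintro ⟨y, hy⟩
    obtain ⟨x, rfl⟩ := hy
    rw [hL0app x, ← hnorm x]
    rfl
  set LI : LinearMap.range A →ₗᵢ[ℂ] E := ⟨L0, hL0norm⟩ with hLI
  refine ⟨LI.extend.toLinearIsometryEquiv rfl, fun i => ?_⟩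
  have h1 : v i ∈ LinearMap.range A := by
    rw [← hApp_single i]; exact LinearMap.mem_range_self A _
  have h2 : LI.extend.toLinearIsometryEquiv rfl (v i) = LI.extend (v i) := rfl
  rw [h2]
  have h3 : (⟨v i, h1⟩ : LinearMap.range A) = ⟨A (Pi.single i 1), LinearMap.mem_range_self A _⟩ := by
    ext; exact (hApp_single i).symm
  have h4 : LI.extend (v i) = LI ⟨v i, h1⟩ := LinearIsometry.extend_apply LI ⟨v i, h1⟩
  rw [h4, h3]
  show L0 _ = _
  rw [hL0app, hBpp_single]


end InnerSpace

section DirB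
local notation "⟪" x ", " y "⟫" => @inner ℂ _ _ x y

lemma SB_bddBelow (N L : ℕ) (Y : Matrix (Fin N) (Fin L) ℂ) : BddBelow (SB N L Y) := by
  refine ⟨0, fun v hv => ?_⟩
  obtain ⟨W, Tm, -, hPSD, hv⟩ := hv
  rw [hv]
  have htr : 0 ≤ ((Matrix.fromBlocks W Yᴴ Y Tm).trace).re := by
    rw [Matrix.trace, Complex.re_sum]
    refine Finset.sum_nonneg fun p _ => ?_
    have h := hPSD.re_dotProduct_nonneg (Pi.single p 1)
    have heq : dotProduct (star (Pi.single p 1))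
        ((Matrix.fromBlocks W Yᴴ Y Tm) *ᵥ (Pi.single p 1))
        = (Matrix.fromBlocks W Yᴴ Y Tm) p p := by
      rw [Matrix.mulVec_single]
      rw [dotProduct]
      rw [Finset.sum_eq_single p]
      · simp
      · intro q _ hq
        simp [Pi.single_apply, hq]
      · simp
    rw [heq] at h
    exact h
  have h2 : (0:ℝ) ≤ 1 / (2 * Real.sqrt N) := by positivity
  exact mul_nonneg h2 htr

open scoped MatrixOrder in
lemma psd_eq_conjTranspose_mul_self {n : Type*} [Fintype n] [DecidableEq n]
    (A : Matrix n n ℂ) (hA : A.PosSemidef) : ∃ R : Matrix n n ℂ, A = Rᴴ * R := by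
  obtain ⟨X, hX, -, hXX⟩ :=
    sub_zero A ▸ CFC.exists_sqrt_of_isSelfAdjoint_of_quasispectrumRestricts hA.isHermitian
      (QuasispectrumRestricts.nnreal_of_nonneg hA.nonneg)
  rw [sub_zero] at hXX
  exact ⟨X, by rw [← hXX]; exact congrArg (· * X) hX.star_eq.symm⟩

lemma dirB {N L : ℕ} (Y : Matrix (Fin N) (Fin L) ℂ) :
    ∀ v ∈ SB N L Y, ∃ t ∈ SA N L Y, t ≤ v := by
  rintro v ⟨W, Tm, hToep, hPSD, hv⟩
  rcases Nat.eq_zero_or_pos N with hN | hN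
  · subst hN
    refine ⟨0, ⟨0, fun k => k.elim0, fun k => k.elim0, fun k => k.elim0, fun k => k.elim0,
      fun k => k.elim0, fun k => k.elim0, ?_, by simp⟩, ?_⟩
    · ext i l; exact i.elim0
    · rw [hv]
      norm_num
  · obtain ⟨R, hR⟩ := psd_eq_conjTranspose_mul_self _ hPSD
    set g : Fin N → EuclideanSpace ℂ (Fin L ⊕ Fin N) := fun i =>
      (WithLp.equiv 2 ((Fin L ⊕ Fin N) → ℂ)).symm (fun s => R s (Sum.inr i)) with hg
    set cv : Fin L → EuclideanSpace ℂ (Fin L ⊕ Fin N) := fun l =>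
      (WithLp.equiv 2 ((Fin L ⊕ Fin N) → ℂ)).symm (fun s => R s (Sum.inl l)) with hcv
    have hinner_g : ∀ i j, ⟪g i, g j⟫ = Tm i j := by
      intro i j
      have h1 : Tm i j = (Rᴴ * R) (Sum.inr i) (Sum.inr j) := by
        rw [← hR, Matrix.fromBlocks_apply₂₂]
      rw [h1, Matrix.mul_apply, PiLp.inner_apply]
      refine Finset.sum_congr rfl fun s _ => ?_
      rw [Matrix.conjTranspose_apply, RCLike.inner_apply, hg]
      simp [RCLike.star_def, mul_comm]
    have hinner_Y : ∀ i l, ⟪g i, cv l⟫ = Y i l := by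
      intro i l
      have h1 : Y i l = (Rᴴ * R) (Sum.inr i) (Sum.inl l) := by
        rw [← hR, Matrix.fromBlocks_apply₂₁]
      rw [h1, Matrix.mul_apply, PiLp.inner_apply]
      refine Finset.sum_congr rfl fun s _ => ?_
      rw [Matrix.conjTranspose_apply, RCLike.inner_apply, hg, hcv]
      simp [RCLike.star_def, mul_comm]
    have hinner_W : ∀ l, ⟪cv l, cv l⟫ = W l l := by
      intro l
      have h1 : W l l = (Rᴴ * R) (Sum.inl l) (Sum.inl l) := by
        rw [← hR, Matrix.fromBlocks_apply₁₁]
      rw [h1, Matrix.mul_apply, PiLp.inner_apply]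
      refine Finset.sum_congr rfl fun s _ => ?_
      rw [Matrix.conjTranspose_apply, RCLike.inner_apply, hcv]
      simp [RCLike.star_def, mul_comm]
    -- the shift unitary
    set ι1 : Fin (N-1) → Fin N := fun p => ⟨p.1, lt_of_lt_of_le p.2 (Nat.sub_le N 1)⟩ with hι1
    set ι2 : Fin (N-1) → Fin N := fun p => ⟨p.1+1, by have := p.2; omega⟩ with hι2
    have hgram : ∀ p q : Fin (N-1), ⟪g (ι1 p), g (ι1 q)⟫ = ⟪g (ι2 p), g (ι2 q)⟫ := by
      intro p q
      rw [hinner_g, hinner_g]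
      exact hToep _ _ _ _ (by simp only [hι1, hι2]; omega)
    obtain ⟨U, hU⟩ := exists_unitary_map (fun p => g (ι1 p)) (fun p => g (ι2 p)) hgram
    have hfr : Module.finrank ℂ (EuclideanSpace ℂ (Fin L ⊕ Fin N)) = L + N := by
      simp [finrank_euclideanSpace]
    obtain ⟨b, μ, hμ1, hUb⟩ := unitary_spectral hfr U
    have hμ0 : ∀ j, μ j ≠ 0 := by
      intro j h
      have h2 := hμ1 j
      rw [h] at h2
      simp at h2
    have hμconj : ∀ j, μ j * (starRingEnd ℂ) (μ j) = 1 := by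
      intro j
      have h2 : Complex.normSq (μ j) = 1 := by
        rw [← Complex.sq_norm, hμ1 j]; norm_num
      rw [Complex.mul_conj, h2, Complex.ofReal_one]
    have hstep : ∀ j x, ⟪b j, U x⟫ = μ j * ⟪b j, x⟫ := by
      intro j x
      have h1 : U.symm (b j) = (μ j)⁻¹ • b j := by
        have h2 := congrArg U.symm (hUb j)
        rw [U.symm_apply_apply, U.symm.map_smul] at h2
        have h3 : (μ j)⁻¹ • (μ j • U.symm (b j)) = (μ j)⁻¹ • b j := by rw [← h2]
        rwa [smul_smul, inv_mul_cancel₀ (hμ0 j), one_smul] at h3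
      calc ⟪b j, U x⟫ = ⟪U (U.symm (b j)), U x⟫ := by rw [U.apply_symm_apply]
        _ = ⟪U.symm (b j), x⟫ := U.inner_map_map _ _
        _ = μ j * ⟪b j, x⟫ := by
            rw [h1, inner_smul_left, map_inv₀]
            have h4 : (starRingEnd ℂ) (μ j) = (μ j)⁻¹ :=
              eq_inv_of_mul_eq_one_left (by rw [mul_comm]; exact hμconj j)
            rw [h4, inv_inv]
    set β : Fin (L+N) → ℂ := fun j => ⟪b j, g ⟨0, hN⟩⟫ with hβ
    set γ : Fin (L+N) → Fin L → ℂ := fun j l => ⟪b j, cv l⟫ with hγ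
    have hcoordm : ∀ (m : ℕ) (hm : m < N) j, ⟪b j, g ⟨m, hm⟩⟫ = μ j ^ m * β j := by
      intro m
      induction m with
      | zero =>
        intro hm j
        simp only [pow_zero, one_mul]
        rfl
      | succ m ih =>
        intro hm j
        have hm' : m < N := by omega
        have hmN1 : m < N - 1 := by omega
        have h1 : g ⟨m+1, hm⟩ = U (g ⟨m, hm'⟩) := by
          have h2 := hU ⟨m, hmN1⟩
          have e1 : ι1 (⟨m, hmN1⟩ : Fin (N-1)) = ⟨m, hm'⟩ := rfl
          have e2 : ι2 (⟨m, hmN1⟩ : Fin (N-1)) = ⟨m+1, hm⟩ := rfl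
          rw [e1, e2] at h2
          exact h2.symm
        rw [h1, hstep j (g ⟨m, hm'⟩), ih hm' j, pow_succ]
        ring
    have hcoord : ∀ j (i : Fin N), ⟪b j, g i⟫ = μ j ^ (i:ℕ) * β j := by
      intro j i
      have := hcoordm (i:ℕ) i.2 j
      rwa [Fin.eta] at this
    have hParseval : ∀ x y : EuclideanSpace ℂ (Fin L ⊕ Fin N),
        ⟪x, y⟫ = ∑ j, (starRingEnd ℂ) ⟪b j, x⟫ * ⟪b j, y⟫ := by
      intro x y
      rw [← LinearIsometryEquiv.inner_map_map b.repr x y, PiLp.inner_apply]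
      refine Finset.sum_congr rfl fun j _ => ?_
      rw [RCLike.inner_apply, b.repr_apply_apply, b.repr_apply_apply]
      exact mul_comm _ _
    -- frequencies
    have habs : ∀ j, ‖(starRingEnd ℂ) (μ j)‖ = 1 := by
      intro j; rw [Complex.norm_conj]; exact hμ1 j
    choose f hf1 hf2 using fun j => exists_freq ((starRingEnd ℂ) (μ j)) (habs j)
    set ψ : Fin (L+N) → Fin L → ℂ := fun j l => (starRingEnd ℂ) (β j) * γ j l with hψ
    have hexp : ∀ j (i : Fin N),
        Complex.exp (2*Real.pi*Complex.I*((i:ℕ):ℂ)*((f j : ℝ):ℂ))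
          = ((starRingEnd ℂ) (μ j)) ^ (i:ℕ) := by
      intro j i
      rw [← hf2 j, ← Complex.exp_nat_mul]
      congr 1
      push_cast
      ring
    have hYd : ∀ i l, Y i l
        = ∑ j, Complex.exp (2*Real.pi*Complex.I*((i:ℕ):ℂ)*((f j : ℝ):ℂ)) * ψ j l := by
      intro i l
      rw [← hinner_Y i l, hParseval (g i) (cv l)]
      refine Finset.sum_congr rfl fun j _ => ?_
      rw [hcoord j i, hexp j i]
      simp only [hψ, hγ, hβ, _root_.map_mul, map_pow]
      try ring
    refine ⟨_, mem_SA_of_expdecomp f ψ hf1 hYd, ?_⟩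
    -- the bound
    set G : Fin (L+N) → ℝ := fun j => ∑ l, ‖γ j l‖^2 with hG
    have hGnn : ∀ j, 0 ≤ G j := fun j => Finset.sum_nonneg fun l _ => sq_nonneg _
    have hψnorm : ∀ j, Real.sqrt (∑ l, ‖ψ j l‖^2) = ‖β j‖ * Real.sqrt (G j) := by
      intro j
      have h1 : ∑ l, ‖ψ j l‖^2 = ‖β j‖^2 * G j := by
        rw [hG, Finset.mul_sum]
        refine Finset.sum_congr rfl fun l _ => ?_
        rw [hψ]
        rw [norm_mul, RCLike.norm_conj]
        ring
      rw [h1, Real.sqrt_mul (sq_nonneg _), Real.sqrt_sq (norm_nonneg _)]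
    have hconj_mul : ∀ z : ℂ, ((starRingEnd ℂ) z * z).re = ‖z‖^2 := by
      intro z
      rw [mul_comm, Complex.mul_conj, Complex.ofReal_re, Complex.normSq_eq_norm_sq]
    have hreW : ∀ l, (W l l).re = ∑ j, ‖γ j l‖^2 := by
      intro l
      rw [← hinner_W l, hParseval (cv l) (cv l), Complex.re_sum]
      refine Finset.sum_congr rfl fun j _ => ?_
      rw [hconj_mul]
    have hreT : ∀ i : Fin N, (Tm i i).re = ∑ j, ‖β j‖^2 := by
      intro i
      rw [← hinner_g i i, hParseval (g i) (g i), Complex.re_sum]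
      refine Finset.sum_congr rfl fun j _ => ?_
      rw [hcoord j i, hconj_mul, norm_mul, norm_pow]
      have hn1 : ‖μ j‖ = 1 := by rw [hμ1 j]
      rw [hn1]
      norm_num
    have htrace : ((Matrix.fromBlocks W Yᴴ Y Tm).trace).re
        = ∑ j, (G j + N * ‖β j‖^2) := by
      rw [Matrix.trace, Complex.re_sum, Fintype.sum_sum_type]
      have h1 : ∀ l, ((Matrix.fromBlocks W Yᴴ Y Tm).diag (Sum.inl l)).re
          = ∑ j, ‖γ j l‖^2 := by
        intro l
        rw [Matrix.diag_apply, Matrix.fromBlocks_apply₁₁]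
        exact hreW l
      have h2 : ∀ i : Fin N, ((Matrix.fromBlocks W Yᴴ Y Tm).diag (Sum.inr i)).re
          = ∑ j, ‖β j‖^2 := by
        intro i
        rw [Matrix.diag_apply, Matrix.fromBlocks_apply₂₂]
        exact hreT i
      have hA : ∑ l, ((Matrix.fromBlocks W Yᴴ Y Tm).diag (Sum.inl l)).re = ∑ j, G j := by
        rw [Finset.sum_congr rfl fun l _ => h1 l, Finset.sum_comm]
      have hB : ∑ i : Fin N, ((Matrix.fromBlocks W Yᴴ Y Tm).diag (Sum.inr i)).re
          = ∑ j, (N:ℝ) * ‖β j‖^2 := by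
        rw [Finset.sum_congr rfl fun i _ => h2 i, Finset.sum_const, Finset.card_univ,
          Fintype.card_fin, nsmul_eq_mul, Finset.mul_sum]
      rw [hA, hB, ← Finset.sum_add_distrib]
    have hNR : (0:ℝ) < N := by exact_mod_cast hN
    have hsN : 0 < Real.sqrt N := Real.sqrt_pos.mpr hNR
    have hAM : ∀ j, ‖β j‖ * Real.sqrt (G j)
        ≤ (1 / (2 * Real.sqrt N)) * (G j + N * ‖β j‖^2) := by
      intro j
      have key : 2 * Real.sqrt N * (‖β j‖ * Real.sqrt (G j)) ≤ G j + N * ‖β j‖^2 := by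
        nlinarith [sq_nonneg (Real.sqrt (G j) - Real.sqrt N * ‖β j‖),
          Real.sq_sqrt (hGnn j), Real.sq_sqrt hNR.le, Real.sqrt_nonneg (G j),
          Real.sqrt_nonneg (N:ℝ), norm_nonneg (β j)]
      rw [div_mul_eq_mul_div, le_div_iff₀ (by positivity)]
      calc ‖β j‖ * Real.sqrt (G j) * (2 * Real.sqrt N)
          = 2 * Real.sqrt N * (‖β j‖ * Real.sqrt (G j)) := by ring
        _ ≤ G j + N * ‖β j‖^2 := key
        _ = 1 * (G j + N * ‖β j‖^2) := by ring
    rw [hv, htrace, Finset.mul_sum]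
    calc ∑ j, Real.sqrt (∑ l, ‖ψ j l‖^2) = ∑ j, ‖β j‖ * Real.sqrt (G j) := by
          exact Finset.sum_congr rfl fun j _ => hψnorm j
      _ ≤ ∑ j, (1 / (2 * Real.sqrt N)) * (G j + N * ‖β j‖^2) :=
          Finset.sum_le_sum fun j _ => hAM j
end DirB

end Stmt14Aux

/-- (Semidefinite characterization of the MMV atomic norm) `‖Y‖_𝒜` equals the optimal
value of the SDP minimizing `(1/(2√N)) tr(U)` over positive semidefinite Hermitian
`U = [[W, Yᴴ],[Y, T(u)]]` with `T(u)` Hermitian Toeplitz. -/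
theorem stmt14 (N L : ℕ) (Y : Matrix (Fin N) (Fin L) ℂ) :
    atomicNorm N L Y = sInf {v : ℝ |
      ∃ (W : Matrix (Fin L) (Fin L) ℂ) (Tm : Matrix (Fin N) (Fin N) ℂ),
        IsToeplitz Tm ∧
        (Matrix.fromBlocks W Yᴴ Y Tm).PosSemidef ∧
        v = (1 / (2 * Real.sqrt N)) * ((Matrix.fromBlocks W Yᴴ Y Tm).trace).re} := by
  have hSAne := Stmt14Aux.SA_nonempty N L Y
  have hSAbdd := Stmt14Aux.SA_bddBelow N L Y
  have hSBbdd := Stmt14Aux.SB_bddBelow N L Y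
  have hA := Stmt14Aux.dirA Y
  have hB := Stmt14Aux.dirB Y
  have hSBne : (Stmt14Aux.SB N L Y).Nonempty := by
    obtain ⟨t, ht⟩ := hSAne
    obtain ⟨v, hv, -⟩ := hA t ht
    exact ⟨v, hv⟩
  have key : sInf (Stmt14Aux.SA N L Y) = sInf (Stmt14Aux.SB N L Y) := by
    apply le_antisymm
    · refine le_csInf hSBne fun v hv => ?_
      obtain ⟨t, ht, hle⟩ := hB v hv
      exact le_trans (csInf_le hSAbdd ht) hle
    · refine le_csInf hSAne fun t ht => ?_
      obtain ⟨v, hv, hle⟩ := hA t ht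
      exact le_trans (csInf_le hSBbdd hv) hle
  exact key
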